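/- Let δ > 0. There exists a constant C > 0 depending only on δ such that for every matrix G ∈ ℝ^{3×3}, vector b ∈ ℝ³, point x ∈ ℝ³, radius r > 0, and measurable set E ⊂ B_r(x) with L³(E) ≥ δ r³, one has ‖G·+b‖_{L^∞(B_r(x))} ≤ C r^{-3/2} ‖G·+b‖_{L²(E)} and |G| ≤ C r^{-5/2} ‖G·+b‖_{L²(E)}. -/

import Mathlib

open MeasureTheory

lemma slice_vol (α d t : ℝ) (hα : α ≠ 0) :
    volume {s : ℝ | |α * s + d| ≤ t} ≤ ENNReal.ofReal (2 * t / |α|) := by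
  have hα' : 0 < |α| := abs_pos.mpr hα
  have hsub : {s : ℝ | |α * s + d| ≤ t} ⊆ Set.Icc (-d/α - t/|α|) (-d/α + t/|α|) := by
    intro s hs
    simp only [Set.mem_setOf_eq] at hs
    have h1 : |α| * |s - (-d/α)| = |α * s + d| := by
      rw [← abs_mul]; congr 1; field_simp; ring
    have h2 : |s - (-d/α)| ≤ t / |α| := by
      rw [le_div_iff₀ hα', mul_comm]; rw [h1]; exact hs
    have := abs_le.mp h2
    constructor <;> linarith [this.1, this.2]
  calc volume {s : ℝ | |α * s + d| ≤ t} ≤ volume (Set.Icc (-d/α - t/|α|) (-d/α + t/|α|)) :=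
        measure_mono hsub
    _ = ENNReal.ofReal (2 * t / |α|) := by
        rw [Real.volume_Icc]; congr 1; field_simp; ring

lemma pi_slab (a : Fin 3 → ℝ) (d t r : ℝ) (x : Fin 3 → ℝ) (i₀ : Fin 3) (hα : a i₀ ≠ 0) :
    volume {z : Fin 3 → ℝ | |∑ i, a i * z i + d| ≤ t ∧ ∀ i, i ≠ i₀ → |z i - x i| ≤ r}
      ≤ ENNReal.ofReal (2 * t / |a i₀|) * ENNReal.ofReal (2 * r) ^ 2 := by
  set e : (Fin 3 → ℝ) ≃ᵐ ℝ × (Fin 2 → ℝ) := MeasurableEquiv.piFinSuccAbove (fun _ : Fin 3 => ℝ) i₀ with he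
  set Q : Set (ℝ × (Fin 2 → ℝ)) :=
    {p | |a i₀ * p.1 + ∑ j, a (i₀.succAbove j) * p.2 j + d| ≤ t ∧
      ∀ j, |p.2 j - x (i₀.succAbove j)| ≤ r} with hQ
  have hQm : MeasurableSet Q := by
    have hm1 : Measurable fun p : ℝ × (Fin 2 → ℝ) =>
        |a i₀ * p.1 + ∑ j, a (i₀.succAbove j) * p.2 j + d| := by
      apply Measurable.abs
      apply Measurable.add _ measurable_const
      exact (measurable_fst.const_mul _).add
        (Finset.measurable_sum _ fun j _ => ((measurable_pi_apply j).comp measurable_snd).const_mul _)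
    apply MeasurableSet.inter
    · exact measurableSet_le hm1 measurable_const
    · have : {p : ℝ × (Fin 2 → ℝ) | ∀ j, |p.2 j - x (i₀.succAbove j)| ≤ r}
          = ⋂ j, {p : ℝ × (Fin 2 → ℝ) | |p.2 j - x (i₀.succAbove j)| ≤ r} := by
        ext p; simp [Set.mem_iInter]
      show MeasurableSet {p : ℝ × (Fin 2 → ℝ) | ∀ j, |p.2 j - x (i₀.succAbove j)| ≤ r}
      rw [this]
      exact MeasurableSet.iInter fun j => measurableSet_le
        ((((measurable_pi_apply j).comp measurable_snd).sub measurable_const).abs) measurable_const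
  have hset : {z : Fin 3 → ℝ | |∑ i, a i * z i + d| ≤ t ∧ ∀ i, i ≠ i₀ → |z i - x i| ≤ r}
      = e ⁻¹' Q := by
    ext z
    simp only [Set.mem_preimage, hQ, Set.mem_setOf_eq, he,
      MeasurableEquiv.piFinSuccAbove_apply]
    constructor
    · rintro ⟨h1, h2⟩
      refine ⟨?_, fun j => h2 _ (i₀.succAbove_ne j)⟩
      rw [Fin.sum_univ_succAbove (fun i => a i * z i) i₀] at h1
      exact h1
    · rintro ⟨h1, h2⟩
      refine ⟨?_, fun i hi => ?_⟩
      · rw [Fin.sum_univ_succAbove (fun i => a i * z i) i₀]; exact h1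
      · obtain ⟨j, rfl⟩ := Fin.exists_succAbove_eq hi
        exact h2 j
  rw [hset, (volume_preserving_piFinSuccAbove (fun _ : Fin 3 => ℝ) i₀).measure_preimage
    hQm.nullMeasurableSet]
  rw [Measure.volume_eq_prod, Measure.prod_apply_symm hQm]
  set Box : Set (Fin 2 → ℝ) :=
    Set.pi Set.univ fun j => Set.Icc (x (i₀.succAbove j) - r) (x (i₀.succAbove j) + r) with hB
  have hbound : ∀ w : Fin 2 → ℝ, volume ((fun s => (s, w)) ⁻¹' Q)
      ≤ Box.indicator (fun _ => ENNReal.ofReal (2 * t / |a i₀|)) w := by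
    intro w
    by_cases hw : w ∈ Box
    · rw [Set.indicator_of_mem hw]
      refine le_trans (measure_mono ?_) (slice_vol (a i₀) (∑ j, a (i₀.succAbove j) * w j + d) t hα)
      intro s hs
      simp only [Set.mem_preimage, Set.mem_setOf_eq] at hs
      simp only [Set.mem_setOf_eq, ← add_assoc]
      exact hs.1
    · rw [Set.indicator_of_notMem hw]
      have hemp : (fun s => (s, w)) ⁻¹' Q = ∅ := by
        ext s
        simp only [Set.mem_preimage, Set.mem_setOf_eq, Set.mem_empty_iff_false, iff_false]
        rintro ⟨-, h2⟩
        exact hw fun j _ => ⟨by linarith [(abs_le.mp (h2 j)).1], by linarith [(abs_le.mp (h2 j)).2]⟩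
      rw [hemp, measure_empty]
  calc ∫⁻ w, volume ((fun s => (s, w)) ⁻¹' Q)
      ≤ ∫⁻ w, Box.indicator (fun _ => ENNReal.ofReal (2 * t / |a i₀|)) w := lintegral_mono hbound
    _ = ENNReal.ofReal (2 * t / |a i₀|) * volume Box := by
        rw [lintegral_indicator]
        · simp [mul_comm]
        · exact MeasurableSet.univ_pi fun j => measurableSet_Icc
    _ ≤ ENNReal.ofReal (2 * t / |a i₀|) * ENNReal.ofReal (2 * r) ^ 2 := by
        gcongr
        rw [hB, volume_pi_pi]
        simp only [Real.volume_Icc]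
        have : ∀ j : Fin 2, x (i₀.succAbove j) + r - (x (i₀.succAbove j) - r) = 2 * r := by
          intro j; ring
        simp_rw [this]
        rw [Finset.prod_const]
        simp

-- coordinate bound in ball
lemma coord_lt {x y : EuclideanSpace ℝ (Fin 3)} {r : ℝ} (hy : y ∈ Metric.ball x r) (i : Fin 3) :
    |y i - x i| < r := by
  have h1 : dist y x < r := Metric.mem_ball.mp hy
  refine lt_of_le_of_lt ?_ h1
  rw [EuclideanSpace.dist_eq]
  have : |y i - x i| = Real.sqrt ((y i - x i)^2) := (Real.sqrt_sq_eq_abs _).symm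
  rw [this]
  apply Real.sqrt_le_sqrt
  simp_rw [Real.dist_eq, sq_abs]
  exact Finset.single_le_sum (f := fun j => (y j - x j)^2) (fun j _ => sq_nonneg _)
    (Finset.mem_univ i)

lemma euc_slab (a : Fin 3 → ℝ) (d t r : ℝ) (x : EuclideanSpace ℝ (Fin 3)) (i₀ : Fin 3)
    (hα : a i₀ ≠ 0) :
    volume {y : EuclideanSpace ℝ (Fin 3) | y ∈ Metric.ball x r ∧ |∑ i, a i * y i + d| ≤ t}
      ≤ ENNReal.ofReal (2 * t / |a i₀|) * ENNReal.ofReal (2 * r) ^ 2 := by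
  set T' : Set (Fin 3 → ℝ) :=
    {z | |∑ i, a i * z i + d| ≤ t ∧ ∀ i, i ≠ i₀ → |z i - x i| ≤ r} with hT'
  have hm : MeasurableSet T' := by
    apply MeasurableSet.inter
    · exact measurableSet_le
        (((Finset.measurable_sum _ fun i _ => (measurable_pi_apply i).const_mul _).add
          measurable_const).abs) measurable_const
    · show MeasurableSet {z : Fin 3 → ℝ | ∀ i, i ≠ i₀ → |z i - x i| ≤ r}
      have : {z : Fin 3 → ℝ | ∀ i, i ≠ i₀ → |z i - x i| ≤ r}
          = ⋂ i, {z : Fin 3 → ℝ | i ≠ i₀ → |z i - x i| ≤ r} := by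
        ext z; simp [Set.mem_iInter]
      rw [this]
      refine MeasurableSet.iInter fun i => ?_
      by_cases h : i = i₀
      · simp [h]
      · simp only [h, ne_eq, not_false_eq_true, forall_true_left]
        exact measurableSet_le (((measurable_pi_apply i).sub measurable_const).abs)
          measurable_const
  have hsub : {y : EuclideanSpace ℝ (Fin 3) | y ∈ Metric.ball x r ∧ |∑ i, a i * y i + d| ≤ t}
      ⊆ (MeasurableEquiv.toLp 2 (Fin 3 → ℝ)).symm ⁻¹' T' := by
    rintro y ⟨hy, hly⟩
    constructor
    · exact hly
    · exact fun i _ => (coord_lt hy i).le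
  calc volume {y : EuclideanSpace ℝ (Fin 3) | y ∈ Metric.ball x r ∧ |∑ i, a i * y i + d| ≤ t}
      ≤ volume ((MeasurableEquiv.toLp 2 (Fin 3 → ℝ)).symm ⁻¹' T') := measure_mono hsub
    _ = volume T' :=
        (EuclideanSpace.volume_preserving_symm_measurableEquiv_toLp (Fin 3)).measure_preimage
          hm.nullMeasurableSet
    _ ≤ _ := pi_slab a d t r (fun i => x i) i₀ hα

lemma lin_cont (a : Fin 3 → ℝ) (c : ℝ) :
    Continuous fun y : EuclideanSpace ℝ (Fin 3) => ∑ i, a i * y i + c := by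
  have h : ∀ i : Fin 3, Continuous fun y : EuclideanSpace ℝ (Fin 3) => y i :=
    fun i => (EuclideanSpace.proj (𝕜 := ℝ) i).continuous
  exact (continuous_finset_sum _ fun i _ => continuous_const.mul (h i)).add continuous_const

lemma lin_lip (a : Fin 3 → ℝ) (c : ℝ) (y z : EuclideanSpace ℝ (Fin 3)) :
    |(∑ i, a i * y i + c) - (∑ i, a i * z i + c)| ≤ Real.sqrt (∑ i, a i ^ 2) * dist y z := by
  set av : EuclideanSpace ℝ (Fin 3) := WithLp.toLp 2 (fun i => a i) with hav
  have h1 : (∑ i, a i * y i + c) - (∑ i, a i * z i + c) = inner ℝ av (y - z) := by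
    rw [PiLp.inner_apply]
    simp only [RCLike.inner_apply, conj_trivial, PiLp.sub_apply]
    have e3 : ∑ i, (y i - z i) * av i = ∑ i, (a i * y i - a i * z i) :=
      Finset.sum_congr rfl fun i _ => by show (y i - z i) * a i = _; ring
    rw [e3, Finset.sum_sub_distrib]
    ring
  rw [h1]
  have h2 : ‖av‖ = Real.sqrt (∑ i, a i ^ 2) := by
    rw [EuclideanSpace.norm_eq]
    congr 1
    exact Finset.sum_congr rfl fun i _ => by rw [Real.norm_eq_abs, sq_abs]
  calc |inner ℝ av (y - z)| ≤ ‖av‖ * ‖y - z‖ := abs_real_inner_le_norm av (y - z)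
    _ = Real.sqrt (∑ i, a i ^ 2) * dist y z := by rw [h2, dist_eq_norm]

set_option maxHeartbeats 1000000 in
lemma key (δ : ℝ) (hδ : 0 < δ) (a : Fin 3 → ℝ) (c : ℝ) (x : EuclideanSpace ℝ (Fin 3))
    (r : ℝ) (hr : 0 < r) (E : Set (EuclideanSpace ℝ (Fin 3))) (hE : MeasurableSet E)
    (hEb : E ⊆ Metric.ball x r) (hvol : δ * r ^ 3 ≤ (volume E).toReal)
    (y₀ : EuclideanSpace ℝ (Fin 3)) (hy₀ : y₀ ∈ Metric.ball x r) :
    min (δ/4) (δ^3/32768) * r ^ 3 * (∑ i, a i * y₀ i + c) ^ 2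
      ≤ ∫ y in E, (∑ i, a i * y i + c) ^ 2 := by
  set L : EuclideanSpace ℝ (Fin 3) → ℝ := fun y => ∑ i, a i * y i + c with hL
  have hcont : Continuous L := lin_cont a c
  have hInt : 0 ≤ ∫ y in E, (L y)^2 := setIntegral_nonneg hE fun y _ => sq_nonneg _
  rcases eq_or_ne (L y₀) 0 with h0 | h0
  · rw [show (∑ i, a i * y₀ i + c) = L y₀ from rfl, h0]
    simpa using hInt
  have hfinE : volume E ≠ ⊤ :=
    ne_top_of_le_ne_top measure_ball_lt_top.ne (measure_mono hEb)
  have hint : IntegrableOn (fun y => (L y)^2) E volume := by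
    refine IntegrableOn.mono_set ?_ (hEb.trans Metric.ball_subset_closedBall)
    exact ((hcont.pow 2).continuousOn).integrableOn_compact (isCompact_closedBall x r)
  set m := |L y₀| with hm
  have hm0 : 0 < m := abs_pos.mpr h0
  set na := Real.sqrt (∑ i, a i ^ 2) with hna
  have hna0 : 0 ≤ na := Real.sqrt_nonneg _
  have e1 : (L y₀)^2 = m^2 := (sq_abs _).symm
  have hc0 : 0 < min (δ/4) (δ^3/32768) := lt_min (by positivity) (by positivity)
  rcases le_or_gt (na * r) (m / 4) with hA | hB
  · -- Case A
    have hball : ∀ y ∈ Metric.ball x r, m/2 ≤ |L y| := by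
      intro y hy
      have h1 : |L y - L y₀| ≤ na * dist y y₀ := lin_lip a c y y₀
      have hd : dist y y₀ ≤ 2*r := by
        have := dist_triangle y x y₀
        have h3 : dist y x < r := Metric.mem_ball.mp hy
        have h4 : dist x y₀ < r := by rw [dist_comm]; exact Metric.mem_ball.mp hy₀
        linarith
      have h5 : |L y - L y₀| ≤ na * (2*r) := h1.trans (by nlinarith)
      have h6 : |L y₀| - |L y| ≤ |L y - L y₀| := by
        rw [abs_sub_comm]; exact abs_sub_abs_le_abs_sub _ _
      have : m - |L y| ≤ m / 2 := by rw [hm]; nlinarith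
      linarith
    have h2 : ∀ y ∈ E, (m/2)^2 ≤ (L y)^2 := by
      intro y hy
      have := hball y (hEb hy)
      calc (m/2)^2 ≤ |L y|^2 := by nlinarith
        _ = (L y)^2 := sq_abs _
    have h3 := setIntegral_ge_of_const_le hE hfinE h2 hint
    have hmin : min (δ/4) (δ^3/32768) ≤ δ/4 := min_le_left _ _
    calc min (δ/4) (δ^3/32768) * r ^ 3 * (L y₀) ^ 2
        ≤ (δ/4) * r^3 * m^2 := by rw [e1]; gcongr
      _ = (m/2)^2 * (δ * r^3) := by ring
      _ ≤ (m/2)^2 * (volume E).toReal := by gcongr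
      _ ≤ ∫ y in E, (L y)^2 := by rw [mul_comm]; exact h3
  · -- Case B
    have hnapos : 0 < na := by nlinarith
    obtain ⟨i₀, -, hmax⟩ := Finset.exists_max_image Finset.univ (fun i => (a i)^2)
      ⟨0, Finset.mem_univ 0⟩
    have hsum3 : (∑ i, (a i)^2) ≤ 3 * (a i₀)^2 := by
      calc ∑ i, (a i)^2 ≤ ∑ _i : Fin 3, (a i₀)^2 :=
            Finset.sum_le_sum fun i _ => hmax i (Finset.mem_univ i)
        _ = 3 * (a i₀)^2 := by rw [Finset.sum_const]; simp
    have hna2 : na^2 = ∑ i, (a i)^2 :=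
      Real.sq_sqrt (Finset.sum_nonneg fun i _ => sq_nonneg _)
    have hai : na ≤ 2 * |a i₀| := by
      nlinarith [sq_abs (a i₀), abs_nonneg (a i₀)]
    have hai0 : a i₀ ≠ 0 := by
      intro h
      rw [h] at hai; simp at hai; nlinarith
    have haipos : 0 < |a i₀| := abs_pos.mpr hai0
    set t := δ * m / 128 with ht
    have ht0 : 0 < t := by positivity
    set S := {y : EuclideanSpace ℝ (Fin 3) | y ∈ Metric.ball x r ∧ |L y| ≤ t} with hSdef
    have hslab := euc_slab a c t r x i₀ hai0
    have hb1 : m / (8*r) < |a i₀| := by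
      rw [div_lt_iff₀ (by positivity)]
      nlinarith
    have hvolS : (volume S).toReal ≤ δ * r^3 / 2 := by
      have h2' : ENNReal.ofReal (2*t/|a i₀|) * ENNReal.ofReal (2*r)^2
          = ENNReal.ofReal (2*t/|a i₀| * (2*r)^2) := by
        rw [← ENNReal.ofReal_pow (by linarith), ← ENNReal.ofReal_mul (by positivity)]
      have h3' : 2*t/|a i₀| * (2*r)^2 ≤ δ * r^3/2 := by
        rw [div_mul_eq_mul_div, div_le_iff₀ haipos]
        have e2 : δ*r^3/2 * (m/(8*r)) = δ*m*r^2/16 := by field_simp; ring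
        nlinarith [mul_le_mul_of_nonneg_left hb1.le (by positivity : (0:ℝ) ≤ δ*r^3/2)]
      calc (volume S).toReal ≤ (ENNReal.ofReal (2*t/|a i₀| * (2*r)^2)).toReal := by
            apply ENNReal.toReal_mono ENNReal.ofReal_ne_top
            rw [← h2']; exact hslab
        _ = 2*t/|a i₀| * (2*r)^2 := ENNReal.toReal_ofReal (by positivity)
        _ ≤ δ * r^3/2 := h3'
    have hSm : MeasurableSet S :=
      measurableSet_ball.inter (measurableSet_le hcont.abs.measurable measurable_const)
    have hfinS : volume (E ∩ S) ≠ ⊤ :=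
      ne_top_of_le_ne_top hfinE (measure_mono Set.inter_subset_left)
    have hfinD : volume (E \ S) ≠ ⊤ :=
      ne_top_of_le_ne_top hfinE (measure_mono Set.diff_subset)
    have hsplit : (volume E).toReal = (volume (E∩S)).toReal + (volume (E\S)).toReal := by
      rw [← ENNReal.toReal_add hfinS hfinD, measure_inter_add_diff E hSm]
    have hfinS'' : volume S ≠ ⊤ :=
      ne_top_of_le_ne_top
        (ENNReal.mul_ne_top ENNReal.ofReal_ne_top (ENNReal.pow_ne_top ENNReal.ofReal_ne_top))
        hslab
    have hIS : (volume (E∩S)).toReal ≤ (volume S).toReal :=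
      ENNReal.toReal_mono hfinS'' (measure_mono Set.inter_subset_right)
    have hvES : δ * r^3/2 ≤ (volume (E\S)).toReal := by linarith
    have h2 : ∀ y ∈ E \ S, t^2 ≤ (L y)^2 := by
      rintro y ⟨hyE, hyS⟩
      have hyb : y ∈ Metric.ball x r := hEb hyE
      have : ¬ (|L y| ≤ t) := fun h => hyS ⟨hyb, h⟩
      push_neg at this
      calc t^2 ≤ |L y|^2 := pow_le_pow_left₀ ht0.le this.le 2
        _ = (L y)^2 := sq_abs _
    have h3 := setIntegral_ge_of_const_le (hE.diff hSm) hfinD h2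
      (hint.mono_set Set.diff_subset)
    have h4 : ∫ y in E \ S, (L y)^2 ≤ ∫ y in E, (L y)^2 := by
      apply setIntegral_mono_set hint
      · exact Filter.Eventually.of_forall fun y => sq_nonneg _
      · exact HasSubset.Subset.eventuallyLE Set.diff_subset
    have hmin : min (δ/4) (δ^3/32768) ≤ δ^3/32768 := min_le_right _ _
    calc min (δ/4) (δ^3/32768) * r ^ 3 * (L y₀) ^ 2
        ≤ (δ^3/32768) * r^3 * m^2 := by rw [e1]; gcongr
      _ = t^2 * (δ * r^3/2) := by rw [ht]; ring
      _ ≤ t^2 * (volume (E\S)).toReal := by gcongr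
      _ ≤ ∫ y in E \ S, (L y)^2 := by rw [mul_comm]; exact h3
      _ ≤ ∫ y in E, (L y)^2 := h4

lemma pick_pt (a : Fin 3 → ℝ) (c : ℝ) (x : EuclideanSpace ℝ (Fin 3)) (r : ℝ) (hr : 0 < r) :
    ∃ y ∈ Metric.ball x r, r^2 * (∑ i, (a i)^2) / 16 ≤ (∑ i, a i * y i + c)^2 := by
  by_cases hS : (∑ i, (a i)^2) = 0
  · exact ⟨x, Metric.mem_ball_self hr, by rw [hS]; simpa using sq_nonneg _⟩
  have hS0 : 0 < ∑ i, (a i)^2 :=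
    lt_of_le_of_ne (Finset.sum_nonneg fun i _ => sq_nonneg _) (Ne.symm hS)
  set na := Real.sqrt (∑ i, (a i)^2) with hna
  have hna0 : 0 < na := Real.sqrt_pos.mpr hS0
  have hna2 : na^2 = ∑ i, (a i)^2 := Real.sq_sqrt hS0.le
  have hkey : r^2 * (∑ i, (a i)^2) / 16 = (r * na / 4)^2 := by
    rw [← hna2]; ring
  set av : EuclideanSpace ℝ (Fin 3) := WithLp.toLp 2 (fun i => a i) with hav
  have hnav : ‖av‖ = na := by
    rw [EuclideanSpace.norm_eq, hna]
    congr 1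
    exact Finset.sum_congr rfl fun i _ => by rw [Real.norm_eq_abs, sq_abs]
  set y₁ : EuclideanSpace ℝ (Fin 3) := x + (r/(2*na)) • av with hy₁def
  have hy₁ : y₁ ∈ Metric.ball x r := by
    rw [Metric.mem_ball, dist_eq_norm, hy₁def, add_sub_cancel_left, norm_smul, hnav,
      Real.norm_eq_abs, abs_of_pos (by positivity)]
    rw [div_mul_eq_mul_div, mul_comm]
    rw [div_lt_iff₀ (by positivity)]
    nlinarith
  have hcoord : ∀ i, y₁ i = x i + (r/(2*na)) * a i := by
    intro i
    rw [hy₁def, PiLp.add_apply, PiLp.smul_apply, smul_eq_mul]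
  have hLy₁ : (∑ i, a i * y₁ i + c) = (∑ i, a i * x i + c) + r * na / 2 := by
    have : ∀ i, a i * y₁ i = a i * x i + (r/(2*na)) * (a i)^2 := by
      intro i; rw [hcoord i]; ring
    simp_rw [this, Finset.sum_add_distrib, ← Finset.mul_sum, ← hna2]
    field_simp
    ring
  rcases le_or_gt (r*na/4) |∑ i, a i * x i + c| with h | h
  · refine ⟨x, Metric.mem_ball_self hr, ?_⟩
    rw [hkey]
    calc (r*na/4)^2 ≤ |∑ i, a i * x i + c|^2 := pow_le_pow_left₀ (by positivity) h 2
      _ = (∑ i, a i * x i + c)^2 := sq_abs _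
  · refine ⟨y₁, hy₁, ?_⟩
    rw [hkey]
    have habs : r*na/4 ≤ |∑ i, a i * y₁ i + c| := by
      rw [hLy₁]
      have h2 := le_abs_self ((∑ i, a i * x i + c) + r*na/2)
      have h3 := neg_abs_le (∑ i, a i * x i + c)
      linarith
    calc (r*na/4)^2 ≤ |∑ i, a i * y₁ i + c|^2 := pow_le_pow_left₀ (by positivity) habs 2
      _ = (∑ i, a i * y₁ i + c)^2 := sq_abs _

theorem stmt0 (δ : ℝ) (hδ : 0 < δ) :
    ∃ C : ℝ, 0 < C ∧
      ∀ (G : Matrix (Fin 3) (Fin 3) ℝ) (b x : EuclideanSpace ℝ (Fin 3)) (r : ℝ), 0 < r →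
        ∀ E : Set (EuclideanSpace ℝ (Fin 3)), MeasurableSet E → E ⊆ Metric.ball x r →
          δ * r ^ 3 ≤ (volume E).toReal →
          (∀ y ∈ Metric.ball x r,
              Real.sqrt (∑ j, (∑ i, G j i * y i + b j) ^ 2) ≤
                C * r ^ (-(3 : ℝ) / 2) *
                  Real.sqrt (∫ y in E, ∑ j, (∑ i, G j i * y i + b j) ^ 2)) ∧
            Real.sqrt (∑ j, ∑ i, (G j i) ^ 2) ≤
              C * r ^ (-(5 : ℝ) / 2) *
                Real.sqrt (∫ y in E, ∑ j, (∑ i, G j i * y i + b j) ^ 2) := by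
  have hc₀ : 0 < min (δ/4) (δ^3/32768) := lt_min (by positivity) (by positivity)
  set c₀ := min (δ/4) (δ^3/32768) with hc₀def
  refine ⟨Real.sqrt (16 / c₀), Real.sqrt_pos.mpr (by positivity), ?_⟩
  set C := Real.sqrt (16 / c₀) with hCdef
  have hC0 : 0 < C := Real.sqrt_pos.mpr (by positivity)
  have hCsq : C * C = 16 / c₀ := Real.mul_self_sqrt (by positivity)
  intro G b x r hr E hE hEb hvol
  have hintj : ∀ j : Fin 3, IntegrableOn (fun y => (∑ i, G j i * y i + b j)^2) E volume := by
    intro j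
    refine IntegrableOn.mono_set ?_ (hEb.trans Metric.ball_subset_closedBall)
    exact (((lin_cont (fun i => G j i) (b j)).pow 2).continuousOn).integrableOn_compact
      (isCompact_closedBall x r)
  have hIsum : (∫ y in E, ∑ j, (∑ i, G j i * y i + b j)^2)
      = ∑ j, ∫ y in E, (∑ i, G j i * y i + b j)^2 :=
    integral_finset_sum Finset.univ fun j _ => hintj j
  have hI0 : 0 ≤ ∫ y in E, ∑ j, (∑ i, G j i * y i + b j)^2 :=
    setIntegral_nonneg hE fun y _ => Finset.sum_nonneg fun j _ => sq_nonneg _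
  have keysum : ∀ z : Fin 3 → EuclideanSpace ℝ (Fin 3), (∀ j, z j ∈ Metric.ball x r) →
      c₀ * r^3 * ∑ j, (∑ i, G j i * (z j) i + b j)^2
        ≤ ∫ y in E, ∑ j, (∑ i, G j i * y i + b j)^2 := by
    intro z hz
    rw [hIsum, Finset.mul_sum]
    exact Finset.sum_le_sum fun j _ =>
      key δ hδ (fun i => G j i) (b j) x r hr E hE hEb hvol (z j) (hz j)
  have hrw3 : r ^ (-(3:ℝ)/2) * r ^ (-(3:ℝ)/2) = (r^3)⁻¹ := by
    rw [← Real.rpow_add hr]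
    rw [show (-(3:ℝ)/2 + -(3:ℝ)/2) = -3 by norm_num, Real.rpow_neg hr.le]
    congr 1
    rw [show ((3:ℝ)) = ((3:ℕ):ℝ) by norm_num, Real.rpow_natCast]
  have hrw5 : r ^ (-(5:ℝ)/2) * r ^ (-(5:ℝ)/2) = (r^5)⁻¹ := by
    rw [← Real.rpow_add hr]
    rw [show (-(5:ℝ)/2 + -(5:ℝ)/2) = -5 by norm_num, Real.rpow_neg hr.le]
    congr 1
    rw [show ((5:ℝ)) = ((5:ℕ):ℝ) by norm_num, Real.rpow_natCast]
  constructor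
  · intro y hy
    have hk := keysum (fun _ => y) (fun _ => hy)
    have h16 : (∑ j, (∑ i, G j i * y i + b j)^2)
        ≤ (C * r ^ (-(3:ℝ)/2))^2 * ∫ y in E, ∑ j, (∑ i, G j i * y i + b j)^2 := by
      have he : (C * r ^ (-(3:ℝ)/2))^2 = 16 / c₀ * (r^3)⁻¹ := by
        rw [pow_two]
        calc C * r ^ (-(3:ℝ)/2) * (C * r ^ (-(3:ℝ)/2))
            = (C * C) * (r ^ (-(3:ℝ)/2) * r ^ (-(3:ℝ)/2)) := by ring
          _ = 16 / c₀ * (r^3)⁻¹ := by rw [hCsq, hrw3]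
      rw [he]
      rw [show (16:ℝ) / c₀ * (r^3)⁻¹ * (∫ y in E, ∑ j, (∑ i, G j i * y i + b j)^2)
          = 16 * (∫ y in E, ∑ j, (∑ i, G j i * y i + b j)^2) / (c₀ * r^3) by
        field_simp]
      rw [le_div_iff₀ (by positivity)]
      nlinarith [hk, hI0]
    calc Real.sqrt (∑ j, (∑ i, G j i * y i + b j)^2)
        ≤ Real.sqrt ((C * r ^ (-(3:ℝ)/2))^2 * ∫ y in E, ∑ j, (∑ i, G j i * y i + b j)^2) :=
          Real.sqrt_le_sqrt h16
      _ = |C * r ^ (-(3:ℝ)/2)| * Real.sqrt (∫ y in E, ∑ j, (∑ i, G j i * y i + b j)^2) := by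
          rw [Real.sqrt_mul (sq_nonneg _), Real.sqrt_sq_eq_abs]
      _ = C * r ^ (-(3:ℝ)/2) * Real.sqrt (∫ y in E, ∑ j, (∑ i, G j i * y i + b j)^2) := by
          rw [abs_of_nonneg (by positivity)]
  · choose z hz1 hz2 using fun j : Fin 3 => pick_pt (fun i => G j i) (b j) x r hr
    have hk := keysum z hz1
    have hlow : c₀ * r^3 * ∑ j, (r^2 * (∑ i, (G j i)^2) / 16)
        ≤ ∫ y in E, ∑ j, (∑ i, G j i * y i + b j)^2 := by
      refine le_trans ?_ hk
      exact mul_le_mul_of_nonneg_left (Finset.sum_le_sum fun j _ => hz2 j) (by positivity)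
    have h16 : (∑ j, ∑ i, (G j i)^2)
        ≤ (C * r ^ (-(5:ℝ)/2))^2 * ∫ y in E, ∑ j, (∑ i, G j i * y i + b j)^2 := by
      have he : (C * r ^ (-(5:ℝ)/2))^2 = 16 / c₀ * (r^5)⁻¹ := by
        rw [pow_two]
        calc C * r ^ (-(5:ℝ)/2) * (C * r ^ (-(5:ℝ)/2))
            = (C * C) * (r ^ (-(5:ℝ)/2) * r ^ (-(5:ℝ)/2)) := by ring
          _ = 16 / c₀ * (r^5)⁻¹ := by rw [hCsq, hrw5]
      rw [he]
      rw [show (16:ℝ) / c₀ * (r^5)⁻¹ * (∫ y in E, ∑ j, (∑ i, G j i * y i + b j)^2)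
          = 16 * (∫ y in E, ∑ j, (∑ i, G j i * y i + b j)^2) / (c₀ * r^5) by
        field_simp]
      rw [le_div_iff₀ (by positivity)]
      have e4 : c₀ * r^3 * ∑ j, (r^2 * (∑ i, (G j i)^2) / 16)
          = (∑ j, ∑ i, (G j i)^2) * (c₀ * r^5) / 16 := by
        rw [← Finset.sum_div, ← Finset.mul_sum]
        ring
      nlinarith [hlow, hI0]
    calc Real.sqrt (∑ j, ∑ i, (G j i)^2)
        ≤ Real.sqrt ((C * r ^ (-(5:ℝ)/2))^2 * ∫ y in E, ∑ j, (∑ i, G j i * y i + b j)^2) :=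
          Real.sqrt_le_sqrt h16
      _ = |C * r ^ (-(5:ℝ)/2)| * Real.sqrt (∫ y in E, ∑ j, (∑ i, G j i * y i + b j)^2) := by
          rw [Real.sqrt_mul (sq_nonneg _), Real.sqrt_sq_eq_abs]
      _ = C * r ^ (-(5:ℝ)/2) * Real.sqrt (∫ y in E, ∑ j, (∑ i, G j i * y i + b j)^2) := by
          rw [abs_of_nonneg (by positivity)]
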